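/- Let (T,η,μ) be a monad and F an endofunctor on a category C, and let λ: FT → TF be a Kleisli distributive law, i.e. a natural transformation with λ∘Fη = ηF and λ∘Fμ = μF∘Tλ∘λT. Define λⁿ: FⁿT → TFⁿ by λ⁰ = id and λ^{n+1} = λⁿF ∘ Fⁿλ. Then for every n, the diagram TFTTFⁿ ⇉ TFTFⁿ → TF^{n+1}, with parallel maps TFμFⁿ and μFTFⁿ∘TλTFⁿ and cocone μF^{n+1}∘TλFⁿ, is objectwise a split coequalizer: with s = TFηFⁿ: TF^{n+1} → TFTFⁿ and t = TFTηFⁿ: TFTFⁿ → TFTTFⁿ the four equations (μF^{n+1}∘TλFⁿ)∘(TFμFⁿ) = (μF^{n+1}∘TλFⁿ)∘(μFTFⁿ∘TλTFⁿ), (μF^{n+1}∘TλFⁿ)∘s = id, (TFμFⁿ)∘t = id, and (μFTFⁿ∘TλTFⁿ)∘t = s∘(μF^{n+1}∘TλFⁿ) hold. Consequently, when C = Set, the graded monad with M_n = TFⁿ, unit η and multiplications μ^{nk} = μF^{n+k}∘TλⁿFᵏ is depth-1. -/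

import Mathlib

open CategoryTheory CategoryTheory.Limits

universe v u

variable {C : Type u} [Category.{v} C]

/-- Iterated application of an endofunctor: `pow F n = Fⁿ` (with `F^{n+1} = Fⁿ ∘ F`). -/
def pow (F : C ⥤ C) : ℕ → C ⥤ C
  | 0 => 𝟭 C
  | n + 1 => F ⋙ pow F n

/-- The iterated Kleisli distributive law `λⁿ : FⁿT → TFⁿ`, with `λ⁰ = id` and
`λ^{n+1} = λⁿF ∘ Fⁿλ`. -/
def klLamPow (T : CategoryTheory.Monad C) (F : C ⥤ C)
    (l : ∀ X : C, F.obj (T.obj X) ⟶ T.obj (F.obj X)) :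
    ∀ (n : ℕ) (X : C), (pow F n).obj (T.obj X) ⟶ T.obj ((pow F n).obj X)
  | 0, X => 𝟙 (T.obj X)
  | n + 1, X => (pow F n).map (l X) ≫ klLamPow T F l n (F.obj X)

/-- `μ` as a morphism of free algebras `free(TZ) ⟶ free(Z)`. -/
def muHom (T : CategoryTheory.Monad C) (Z : C) :
    (Monad.free T).obj (T.obj Z) ⟶ (Monad.free T).obj Z where
  f := T.μ.app Z
  h := T.assoc Z

lemma muNat (T : CategoryTheory.Monad C) {A B : C} (f : A ⟶ B) :
    T.map (T.map f) ≫ T.μ.app B = T.μ.app A ≫ T.map f := T.μ.naturality f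

lemma muNat_assoc (T : CategoryTheory.Monad C) {A B : C} (f : A ⟶ B) {Z : C}
    (h : T.obj B ⟶ Z) :
    T.map (T.map f) ≫ T.μ.app B ≫ h = T.μ.app A ≫ T.map f ≫ h := by
  rw [← Category.assoc, muNat, Category.assoc]

lemma muAssoc_assoc (T : CategoryTheory.Monad C) (A : C) {Z : C} (h : T.obj A ⟶ Z) :
    T.map (T.μ.app A) ≫ T.μ.app A ≫ h = T.μ.app (T.obj A) ≫ T.μ.app A ≫ h := by
  rw [← Category.assoc, T.assoc, Category.assoc]

/-- Given a monad `T`, an endofunctor `F` and a Kleisli distributive law `λ : FT → TF`,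
for every `n` the diagram `TFTTFⁿ ⇉ TFTFⁿ → TF^{n+1}` (parallel maps `TFμFⁿ` and
`μFTFⁿ ∘ TλTFⁿ`, cocone `μF^{n+1} ∘ TλFⁿ`) is objectwise a split coequalizer, with
splittings `s = TFηFⁿ` and `t = TFTηFⁿ`; consequently (the forgetful functor
creating these coequalizers) the corresponding fork of free `T`-algebras is a
coequalizer in the Eilenberg-Moore category of `T`, i.e. the graded monad
`Mₙ = TFⁿ` is depth-1. -/
theorem kleisli_law_graded_monad_depth1 (T : CategoryTheory.Monad C) (F : C ⥤ C)
    (l : ∀ X : C, F.obj (T.obj X) ⟶ T.obj (F.obj X))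
    (l_nat : ∀ {X Y : C} (f : X ⟶ Y), F.map (T.map f) ≫ l Y = l X ≫ T.map (F.map f))
    (l_unit : ∀ X : C, F.map (T.η.app X) ≫ l X = T.η.app (F.obj X))
    (l_mult : ∀ X : C,
      F.map (T.μ.app X) ≫ l X = l (T.obj X) ≫ T.map (l X) ≫ T.μ.app (F.obj X))
    (n : ℕ) (X : C) :
    ∀ Y : C, Y = (pow F n).obj X →
      -- the four split coequalizer equations, at `Y = FⁿX`
      (T.map (F.map (T.μ.app Y)) ≫ (T.map (l Y) ≫ T.μ.app (F.obj Y))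
          = (T.map (l (T.obj Y)) ≫ T.μ.app (F.obj (T.obj Y)))
              ≫ (T.map (l Y) ≫ T.μ.app (F.obj Y))) ∧
      (T.map (F.map (T.η.app Y)) ≫ (T.map (l Y) ≫ T.μ.app (F.obj Y))
          = 𝟙 (T.obj (F.obj Y))) ∧
      (T.map (F.map (T.map (T.η.app Y))) ≫ T.map (F.map (T.μ.app Y))
          = 𝟙 (T.obj (F.obj (T.obj Y)))) ∧
      (T.map (F.map (T.map (T.η.app Y)))
            ≫ (T.map (l (T.obj Y)) ≫ T.μ.app (F.obj (T.obj Y)))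
          = (T.map (l Y) ≫ T.μ.app (F.obj Y)) ≫ T.map (F.map (T.η.app Y))) ∧
      -- the split coequalizer, with the above splittings
      (∃ sc : IsSplitCoequalizer
          (T.map (l (T.obj Y)) ≫ T.μ.app (F.obj (T.obj Y)))
          (T.map (F.map (T.μ.app Y)))
          (T.map (l Y) ≫ T.μ.app (F.obj Y)),
        sc.rightSection = T.map (F.map (T.η.app Y)) ∧
        sc.leftSection = T.map (F.map (T.map (T.η.app Y)))) ∧
      -- consequently: the fork is a coequalizer in the Eilenberg-Moore category of `T`
      (∃ w : ((Monad.free T).map (F.map (T.μ.app Y)))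
              ≫ ((Monad.free T).map (l Y) ≫ muHom T (F.obj Y))
            = ((Monad.free T).map (l (T.obj Y)) ≫ muHom T (F.obj (T.obj Y)))
              ≫ ((Monad.free T).map (l Y) ≫ muHom T (F.obj Y)),
        Nonempty (IsColimit (Cofork.ofπ
          ((Monad.free T).map (l Y) ≫ muHom T (F.obj Y)) w))) := by
  intro Y _
  have h1 : T.map (F.map (T.μ.app Y)) ≫ (T.map (l Y) ≫ T.μ.app (F.obj Y))
      = (T.map (l (T.obj Y)) ≫ T.μ.app (F.obj (T.obj Y)))
          ≫ (T.map (l Y) ≫ T.μ.app (F.obj Y)) := by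
    rw [← Category.assoc (T.map (F.map (T.μ.app Y))), ← T.map_comp, l_mult]
    simp only [T.map_comp, Category.assoc]
    rw [show T.map (T.μ.app (F.obj Y)) ≫ T.μ.app (F.obj Y)
        = T.μ.app (T.obj (F.obj Y)) ≫ T.μ.app (F.obj Y) from T.assoc (F.obj Y),
      muNat_assoc]
  have h2 : T.map (F.map (T.η.app Y)) ≫ (T.map (l Y) ≫ T.μ.app (F.obj Y))
      = 𝟙 (T.obj (F.obj Y)) := by
    rw [← Category.assoc, ← T.map_comp, l_unit]
    exact T.right_unit (F.obj Y)
  have h3 : T.map (F.map (T.map (T.η.app Y))) ≫ T.map (F.map (T.μ.app Y))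
      = 𝟙 (T.obj (F.obj (T.obj Y))) := by
    rw [← T.map_comp, ← F.map_comp]
    rw [show T.map (T.η.app Y) ≫ T.μ.app Y = 𝟙 (T.obj Y) from T.right_unit Y]
    simp
  have h4 : T.map (F.map (T.map (T.η.app Y)))
        ≫ (T.map (l (T.obj Y)) ≫ T.μ.app (F.obj (T.obj Y)))
      = (T.map (l Y) ≫ T.μ.app (F.obj Y)) ≫ T.map (F.map (T.η.app Y)) := by
    rw [← Category.assoc, ← T.map_comp, l_nat, T.map_comp, Category.assoc, muNat]
    simp
  refine ⟨h1, h2, h3, h4, ⟨⟨_, _, h1.symm, h2, h3, h4⟩, rfl, rfl⟩, ?_⟩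
  have w : ((Monad.free T).map (F.map (T.μ.app Y)))
        ≫ ((Monad.free T).map (l Y) ≫ muHom T (F.obj Y))
      = ((Monad.free T).map (l (T.obj Y)) ≫ muHom T (F.obj (T.obj Y)))
        ≫ ((Monad.free T).map (l Y) ≫ muHom T (F.obj Y)) := by
    ext
    have h1' := h1
    simp only [Category.assoc] at h1'
    simp [muHom]
    exact h1'
  refine ⟨w, ⟨Cofork.IsColimit.mk' _ fun s => ?_⟩⟩
  have hcond : T.map (F.map (T.μ.app Y)) ≫ s.π.f
      = T.map (l (T.obj Y)) ≫ T.μ.app (F.obj (T.obj Y)) ≫ s.π.f := by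
    have := congrArg Monad.Algebra.Hom.f s.condition
    simp [muHom] at this
    exact this
  have hπ : T.map s.π.f ≫ s.pt.a = T.μ.app (F.obj (T.obj Y)) ≫ s.π.f := s.π.h
  refine ⟨⟨T.map (F.map (T.η.app Y)) ≫ s.π.f, ?_⟩, ?_, ?_⟩
  · -- algebra hom condition
    dsimp
    show T.map (T.map (F.map (T.η.app Y)) ≫ s.π.f) ≫ s.pt.a
      = T.μ.app (F.obj Y) ≫ T.map (F.map (T.η.app Y)) ≫ s.π.f
    erw [T.map_comp, Category.assoc, hπ, muNat_assoc]
    rfl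
  · -- factorization
    ext
    dsimp [muHom]
    show (T.map (l Y) ≫ T.μ.app (F.obj Y)) ≫ T.map (F.map (T.η.app Y)) ≫ s.π.f = s.π.f
    erw [Category.assoc, ← muNat_assoc, ← T.map_comp_assoc, ← l_nat, T.map_comp_assoc,
      ← hcond, ← Category.assoc, ← T.map_comp, ← F.map_comp]
    rw [show T.map (T.η.app Y) ≫ T.μ.app Y = 𝟙 (T.obj Y) from T.right_unit Y]
    simp
    exact Category.id_comp _
  · -- uniqueness
    intro m hm
    have hm' : T.map (l Y) ≫ T.μ.app (F.obj Y) ≫ m.f = s.π.f := by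
      have := congrArg Monad.Algebra.Hom.f hm
      exact (Category.assoc _ _ _).symm.trans this
    ext
    dsimp
    show m.f = T.map (F.map (T.η.app Y)) ≫ s.π.f
    erw [← hm', ← Category.assoc, ← Category.assoc, ← T.map_comp, l_unit]
    rw [show T.map (T.η.app (F.obj Y)) ≫ T.μ.app (F.obj Y) = 𝟙 (T.obj (F.obj Y)) from
      T.right_unit (F.obj Y)]
    simp
    exact (Category.id_comp _).symm
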